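/- arXiv:2012.09293 — 7 statements merged into one kernel-verified Lean document; each statement's English description precedes it below -/
import Mathlib

section
/- Let n ∈ ℕ and α, β, v̲, v̄, λ ∈ ℝⁿ with α ≤ β, v̲ ≤ v̄ and λ ≥ 0 (all inequalities elementwise). Let φ : ℝⁿ → ℝⁿ be a function such that for every v ∈ ℝⁿ with v̲ ≤ v ≤ v̄ and every index i, (φ(v)_i − α_i v_i)(β_i v_i − φ(v)_i) ≥ 0. Then for every v with v̲ ≤ v ≤ v̄ and w = φ(v), the quadratic form [v; w]ᵀ [[-2AB Λ, (A+B)Λ], [(A+B)Λ, -2Λ]] [v; w] is nonnegative, where A = diag(α), B = diag(β), Λ = diag(λ). -/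
open Matrix Finset

/-- Local sector quadratic constraint for the combined nonlinearity
(Lemma 1 in the paper). -/
theorem stmt_1 (n : ℕ) (α β vlo vhi lam : Fin n → ℝ)
    (hαβ : ∀ i, α i ≤ β i) (hv : ∀ i, vlo i ≤ vhi i) (hlam : ∀ i, 0 ≤ lam i)
    (φ : (Fin n → ℝ) → (Fin n → ℝ))
    (hsec : ∀ v : Fin n → ℝ, (∀ i, vlo i ≤ v i ∧ v i ≤ vhi i) →
      ∀ i, (φ v i - α i * v i) * (β i * v i - φ v i) ≥ 0) :
    ∀ v : Fin n → ℝ, (∀ i, vlo i ≤ v i ∧ v i ≤ vhi i) →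
      Sum.elim v (φ v) ⬝ᵥ
        (Matrix.fromBlocks
          ((-2 : ℝ) • (Matrix.diagonal α * Matrix.diagonal β * Matrix.diagonal lam))
          ((Matrix.diagonal α + Matrix.diagonal β) * Matrix.diagonal lam)
          ((Matrix.diagonal α + Matrix.diagonal β) * Matrix.diagonal lam)
          ((-2 : ℝ) • Matrix.diagonal lam)).mulVec (Sum.elim v (φ v)) ≥ 0 := by
  intro v hvv
  have hs := hsec v hvv
  simp only [Matrix.fromBlocks_mulVec, Matrix.diagonal_mul_diagonal, Matrix.add_mul,
    Matrix.smul_mulVec, Matrix.mulVec_diagonal, Matrix.add_mulVec, dotProduct,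
    Fintype.sum_sum_type, Sum.elim_inl, Sum.elim_inr, Pi.add_apply, Pi.smul_apply,
    smul_eq_mul, ge_iff_le, Sum.elim_comp_inl, Sum.elim_comp_inr, ← Finset.sum_add_distrib]
  apply Finset.sum_nonneg
  intro i _
  nlinarith [mul_nonneg (hlam i) (hs i)]
end

section
/- Let ν̄ > 0 and set α := tanh(ν̄)/ν̄. Then for every ν ∈ [−ν̄, ν̄], (tanh(ν) − α·ν)·(ν − tanh(ν)) ≥ 0; that is, tanh restricted to [−ν̄, ν̄] satisfies the local sector [tanh(ν̄)/ν̄, 1]. -/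
open Real

private lemma hasDerivAt_tanh' (x : ℝ) :
    HasDerivAt Real.tanh (1 / Real.cosh x ^ 2) x := by
  have hc : Real.cosh x ≠ 0 := (Real.cosh_pos x).ne'
  have h := (Real.hasDerivAt_sinh x).div (Real.hasDerivAt_cosh x) hc
  have hfun : (fun y => Real.sinh y / Real.cosh y) = Real.tanh := by
    funext y; rw [Real.tanh_eq_sinh_div_cosh]
  rw [show (Real.sinh / Real.cosh) = Real.tanh from hfun] at h
  refine h.congr_deriv ?_
  field_simp
  have := Real.cosh_sq_sub_sinh_sq x
  ring_nf
  ring_nf at this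
  linarith

private lemma tanh_le_self' {x : ℝ} (hx : 0 ≤ x) : Real.tanh x ≤ x := by
  have hmono : Monotone (fun y => y - Real.tanh y) := by
    apply monotone_of_deriv_nonneg
    · exact differentiable_id.sub fun y => (hasDerivAt_tanh' y).differentiableAt
    · intro y
      have h : HasDerivAt (fun y => y - Real.tanh y) (1 - 1 / Real.cosh y ^ 2) y :=
        (hasDerivAt_id y).sub (hasDerivAt_tanh' y)
      rw [h.deriv]
      have h1 : (1:ℝ) ≤ Real.cosh y := Real.one_le_cosh y
      have h2 : (1:ℝ) ≤ Real.cosh y ^ 2 := by nlinarith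
      have : 1 / Real.cosh y ^ 2 ≤ 1 := by
        rw [div_le_one (by positivity)]; exact h2
      linarith
  have := hmono hx
  simpa using this

/-- tanh restricted to [-nubar, nubar] satisfies the local sector [tanh(nubar)/nubar, 1]. -/
theorem stmt_3 (nubar : ℝ) (hnubar : 0 < nubar) :
    ∀ ν ∈ Set.Icc (-nubar) nubar,
      (Real.tanh ν - (Real.tanh nubar / nubar) * ν) * (ν - Real.tanh ν) ≥ 0 := by
  -- concavity of g = nubar * tanh - tanh nubar * id on [0, nubar]
  set g : ℝ → ℝ := fun x => nubar * Real.tanh x - Real.tanh nubar * x with hg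
  have hconc : ConcaveOn ℝ (Set.Icc 0 nubar) g := by
    apply concaveOn_of_hasDerivWithinAt2_nonpos (f' := fun x => nubar / Real.cosh x ^ 2 - Real.tanh nubar)
      (f'' := fun x => (0 * Real.cosh x ^ 2 - nubar * (↑2 * Real.cosh x ^ 1 * Real.sinh x)) / (Real.cosh x ^ 2) ^ 2)
      (convex_Icc 0 nubar)
    · have : Differentiable ℝ g := (differentiable_const nubar |>.mul
        (fun y => (hasDerivAt_tanh' y).differentiableAt : Differentiable ℝ Real.tanh)).sub
        ((differentiable_const (Real.tanh nubar)).mul differentiable_id)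
      exact this.continuous.continuousOn
    · intro x hx
      have h : HasDerivAt g (nubar * (1 / Real.cosh x ^ 2) - Real.tanh nubar * 1) x :=
        ((hasDerivAt_tanh' x).const_mul nubar).sub ((hasDerivAt_id x).const_mul (Real.tanh nubar))
      have h' : HasDerivAt g (nubar / Real.cosh x ^ 2 - Real.tanh nubar) x := by
        convert h using 1; ring
      exact h'.hasDerivWithinAt
    · intro x hx
      have hc : Real.cosh x ^ 2 ≠ 0 := by positivity
      have h : HasDerivAt (fun x => nubar / Real.cosh x ^ 2 - Real.tanh nubar)
          ((0 * Real.cosh x ^ 2 - nubar * (↑2 * Real.cosh x ^ 1 * Real.sinh x)) / (Real.cosh x ^ 2) ^ 2) x := by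
        have := ((hasDerivAt_const x nubar).div ((Real.hasDerivAt_cosh x).pow 2) hc).sub_const
          (Real.tanh nubar)
        exact this.congr_deriv (by norm_num)
      exact h.hasDerivWithinAt
    · intro x hx
      rw [interior_Icc] at hx
      have hx0 : 0 ≤ x := le_of_lt hx.1
      have hs : 0 ≤ Real.sinh x := by
        have := Real.sinh_le_sinh.2 hx0; rwa [Real.sinh_zero] at this
      have hcp : 0 < Real.cosh x := Real.cosh_pos x
      apply div_nonpos_of_nonpos_of_nonneg
      · nlinarith [mul_nonneg (mul_nonneg hnubar.le hcp.le) hs]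
      · positivity
  -- key: on [0, nubar], tanh ν ≥ (tanh nubar / nubar) * ν and tanh ν ≤ ν
  have key : ∀ μ ∈ Set.Icc (0:ℝ) nubar,
      (Real.tanh nubar / nubar) * μ ≤ Real.tanh μ ∧ Real.tanh μ ≤ μ := by
    intro μ hμ
    refine ⟨?_, tanh_le_self' hμ.1⟩
    have h0 : (0:ℝ) ∈ Set.Icc (0:ℝ) nubar := ⟨le_refl 0, le_of_lt hnubar⟩
    have h1 : nubar ∈ Set.Icc (0:ℝ) nubar := ⟨le_of_lt hnubar, le_refl nubar⟩
    have ha : 0 ≤ (nubar - μ) / nubar := by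
      apply div_nonneg _ (le_of_lt hnubar); linarith [hμ.2]
    have hb : 0 ≤ μ / nubar := div_nonneg hμ.1 (le_of_lt hnubar)
    have hab : (nubar - μ) / nubar + μ / nubar = 1 := by field_simp; ring
    have := hconc.2 h0 h1 ha hb hab
    simp only [smul_zero, zero_add, smul_eq_mul] at this
    rw [div_mul_cancel₀ _ hnubar.ne'] at this
    have hg0 : g 0 = 0 := by simp [hg]
    have hgn : g nubar = 0 := by simp [hg]; ring
    rw [hg0, hgn] at this
    simp only [mul_zero, add_zero, zero_add] at this
    have hgμ : 0 ≤ nubar * Real.tanh μ - Real.tanh nubar * μ := by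
      have : (0:ℝ) ≤ g μ := this
      simpa [hg] using this
    rw [div_mul_eq_mul_div, div_le_iff₀ hnubar]
    nlinarith
  intro ν hν
  rcases le_or_gt 0 ν with hν0 | hν0
  · obtain ⟨h1, h2⟩ := key ν ⟨hν0, hν.2⟩
    exact mul_nonneg (by linarith) (by linarith)
  · have hμ : -ν ∈ Set.Icc (0:ℝ) nubar := ⟨by linarith, by linarith [hν.1]⟩
    obtain ⟨h1, h2⟩ := key (-ν) hμ
    rw [Real.tanh_neg] at h1 h2
    have e : (Real.tanh ν - Real.tanh nubar / nubar * ν) * (ν - Real.tanh ν)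
        = (-Real.tanh ν - Real.tanh nubar / nubar * (-ν)) * (-ν - -Real.tanh ν) := by ring
    rw [e]
    exact mul_nonneg (by linarith) (by linarith)
end

section
/- Consider the plant x(k+1) = A_G x(k) + B_G u(k) with A_G ∈ ℝ^{n×n}, B_G ∈ ℝ^{n×m}, and the polytopic state constraint set X = {x ∈ ℝⁿ : |H_iᵀ x| ≤ h_i for i = 1,…,n_X} with h_i ≥ 0. Let the controller be given in LFT form by matrices N_ux ∈ ℝ^{m×n}, N_uw ∈ ℝ^{m×p}, N_vx ∈ ℝ^{p×n}, N_vw ∈ ℝ^{p×p}, a nonlinearity φ : ℝᵖ → ℝᵖ with φ(0) = 0, and a map w : ℝⁿ → ℝᵖ satisfying w(x) = φ(N_vx x + N_vw w(x)) for all x and w(0) = 0; the control is u(x) = N_ux x + N_uw w(x) and the closed-loop map is F(x) = A_G x + B_G u(x). Suppose there are vectors v̲ ≤ 0 ≤ v̄ and α ≤ β in ℝᵖ such that: (a) for every x ∈ X, the vector v(x) := N_vx x + N_vw w(x) satisfies v̲ ≤ v(x) ≤ v̄; (b) for every v with v̲ ≤ v ≤ v̄ and every i, (φ(v)_i − α_i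 v_i)(β_i v_i − φ(v)_i) ≥ 0. Suppose further there exist a symmetric positive definite P ∈ ℝ^{n×n} and λ ∈ ℝᵖ with λ ≥ 0 such that, with A_φ = diag(α), B_φ = diag(β), Λ = diag(λ), R_V = [[I_n, 0], [N_ux, N_uw]], R_φ = [[N_vx, N_vw], [0, I_p]]: (c) R_Vᵀ [[A_GᵀPA_G − P, A_GᵀPB_G], [B_GᵀPA_G, B_GᵀPB_G]] R_V + R_φᵀ [[-2A_φB_φΛ, (A_φ+B_φ)Λ], [(A_φ+B_φ)Λ, -2Λ]] R_φ is negative definite; (d) for each i = 1,…,n_X, the block matrix [[h_i², H_iᵀ], [H_i, P]] is positive semidefinite. Then E(P) ⊆ X, and for every x₀ ∈ E(P) the trajectory x(0) = x₀, x(k+1) = F(x(k)) satisfies x(k) ∈ E(P) for all k ≥ 0 and x(k) → 0 as k → ∞. -/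
open Matrix Filter

lemma conj_form {k l o : Type*} [Fintype k] [Fintype l] [Fintype o]
    (A : Matrix o k ℝ) (Pm : Matrix o o ℝ) (B : Matrix o l ℝ) (x : k → ℝ) (y : l → ℝ) :
    x ⬝ᵥ (Aᵀ * Pm * B) *ᵥ y = (A *ᵥ x) ⬝ᵥ Pm *ᵥ (B *ᵥ y) := by
  rw [← Matrix.mulVec_mulVec, ← Matrix.mulVec_mulVec, Matrix.dotProduct_mulVec,
    Matrix.vecMul_transpose]

lemma quad_smul {k : Type*} [Fintype k] (M : Matrix k k ℝ) (c : ℝ) (z : k → ℝ) :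
    (c • z) ⬝ᵥ M *ᵥ (c • z) = c ^ 2 * (z ⬝ᵥ M *ᵥ z) := by
  rw [Matrix.mulVec_smul, dotProduct_smul, smul_dotProduct]
  simp [smul_eq_mul]; ring

lemma quad_cont {k : Type*} [Fintype k] (M : Matrix k k ℝ) :
    Continuous fun z : k → ℝ => z ⬝ᵥ M *ᵥ z :=
  continuous_id.dotProduct (continuous_const.matrix_mulVec continuous_id)

lemma quad_upper {k : Type*} [Fintype k] [Nonempty k] (M : Matrix k k ℝ) :
    ∃ z₀ : k → ℝ, ‖z₀‖ = 1 ∧ ∀ z : k → ℝ, z ⬝ᵥ M *ᵥ z ≤ (z₀ ⬝ᵥ M *ᵥ z₀) * ‖z‖ ^ 2 := by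
  have hne : (Metric.sphere (0 : k → ℝ) 1).Nonempty :=
    NormedSpace.sphere_nonempty.2 zero_le_one
  obtain ⟨z₀, hz₀mem, hz₀max⟩ := (isCompact_sphere (0 : k → ℝ) 1).exists_isMaxOn hne
    ((quad_cont M).continuousOn)
  have hz₀ : ‖z₀‖ = 1 := by simpa using hz₀mem
  refine ⟨z₀, hz₀, fun z => ?_⟩
  rcases eq_or_ne z 0 with rfl | hz
  · simp
  · have hnz : ‖z‖ ≠ 0 := norm_ne_zero_iff.2 hz
    have hmem : ‖z‖⁻¹ • z ∈ Metric.sphere (0 : k → ℝ) 1 := by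
      simp [norm_smul, abs_of_nonneg (inv_nonneg.2 (norm_nonneg z)), inv_mul_cancel₀ hnz]
    have hle := hz₀max hmem
    have h1 : (‖z‖⁻¹ • z) ⬝ᵥ M *ᵥ (‖z‖⁻¹ • z) = ‖z‖⁻¹ ^ 2 * (z ⬝ᵥ M *ᵥ z) := quad_smul M _ z
    simp only [Set.mem_setOf_eq] at hle
    have h2 : ‖z‖⁻¹ ^ 2 * (z ⬝ᵥ M *ᵥ z) ≤ z₀ ⬝ᵥ M *ᵥ z₀ := by
      simpa [h1] using hle
    have h3 : (0:ℝ) < ‖z‖ ^ 2 := by positivity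
    calc z ⬝ᵥ M *ᵥ z = (‖z‖⁻¹ ^ 2 * (z ⬝ᵥ M *ᵥ z)) * ‖z‖ ^ 2 := by
          field_simp
      _ ≤ (z₀ ⬝ᵥ M *ᵥ z₀) * ‖z‖ ^ 2 := by nlinarith

set_option maxHeartbeats 1000000 in
/-- Theorem 1 of the paper: the Lyapunov LMI together with the set-containment
LMIs certifies that E(P) ⊆ X is an invariant inner-approximation of the region
of attraction of the closed loop of an LTI plant with an NN controller. -/
theorem stmt_8 (n m p nX : ℕ)
    (A_G : Matrix (Fin n) (Fin n) ℝ) (B_G : Matrix (Fin n) (Fin m) ℝ)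
    (H : Fin nX → Fin n → ℝ) (h : Fin nX → ℝ) (hh : ∀ i, 0 ≤ h i)
    (Nux : Matrix (Fin m) (Fin n) ℝ) (Nuw : Matrix (Fin m) (Fin p) ℝ)
    (Nvx : Matrix (Fin p) (Fin n) ℝ) (Nvw : Matrix (Fin p) (Fin p) ℝ)
    (φ : (Fin p → ℝ) → (Fin p → ℝ)) (hφ0 : φ 0 = 0)
    (w : (Fin n → ℝ) → (Fin p → ℝ))
    (hw : ∀ x, w x = φ (Nvx.mulVec x + Nvw.mulVec (w x))) (hw0 : w 0 = 0)
    (u : (Fin n → ℝ) → (Fin m → ℝ))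
    (hu : ∀ x, u x = Nux.mulVec x + Nuw.mulVec (w x))
    (F : (Fin n → ℝ) → (Fin n → ℝ))
    (hF : ∀ x, F x = A_G.mulVec x + B_G.mulVec (u x))
    (vlo vhi α β : Fin p → ℝ)
    (hvlo : ∀ i, vlo i ≤ 0) (hvhi : ∀ i, 0 ≤ vhi i) (hαβ : ∀ i, α i ≤ β i)
    -- (a) activation input bounds hold on the state constraint set X
    (ha : ∀ x : Fin n → ℝ, (∀ i, |H i ⬝ᵥ x| ≤ h i) →
      ∀ i, vlo i ≤ (Nvx.mulVec x + Nvw.mulVec (w x)) i ∧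
           (Nvx.mulVec x + Nvw.mulVec (w x)) i ≤ vhi i)
    -- (b) local sector condition for the nonlinearity
    (hb : ∀ v : Fin p → ℝ, (∀ i, vlo i ≤ v i ∧ v i ≤ vhi i) →
      ∀ i, 0 ≤ (φ v i - α i * v i) * (β i * v i - φ v i))
    (P : Matrix (Fin n) (Fin n) ℝ) (hP : P.PosDef)
    (lam : Fin p → ℝ) (hlam : ∀ i, 0 ≤ lam i)
    -- (c) the Lyapunov LMI is negative definite
    (hc : ∀ z : Fin n ⊕ Fin p → ℝ, z ≠ 0 →
      z ⬝ᵥ ((Matrix.fromBlocks 1 0 Nux Nuw : Matrix (Fin n ⊕ Fin m) (Fin n ⊕ Fin p) ℝ)ᵀ *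
              (Matrix.fromBlocks (A_Gᵀ * P * A_G - P) (A_Gᵀ * P * B_G)
                (B_Gᵀ * P * A_G) (B_Gᵀ * P * B_G)) *
              (Matrix.fromBlocks 1 0 Nux Nuw) +
            (Matrix.fromBlocks Nvx Nvw 0 1 : Matrix (Fin p ⊕ Fin p) (Fin n ⊕ Fin p) ℝ)ᵀ *
              (Matrix.fromBlocks
                ((-2 : ℝ) • (Matrix.diagonal α * Matrix.diagonal β * Matrix.diagonal lam))
                ((Matrix.diagonal α + Matrix.diagonal β) * Matrix.diagonal lam)
                ((Matrix.diagonal α + Matrix.diagonal β) * Matrix.diagonal lam)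
                ((-2 : ℝ) • Matrix.diagonal lam)) *
              (Matrix.fromBlocks Nvx Nvw 0 1)).mulVec z < 0)
    -- (d) the set-containment LMIs
    (hd : ∀ i, (Matrix.fromBlocks (!![(h i) ^ 2])
        (Matrix.of fun (_ : Fin 1) j => H i j)
        (Matrix.of fun j (_ : Fin 1) => H i j) P).PosSemidef) :
    -- conclusion: E(P) ⊆ X, invariance of E(P), and convergence to 0
    (∀ x : Fin n → ℝ, x ⬝ᵥ P.mulVec x ≤ 1 → ∀ i, |H i ⬝ᵥ x| ≤ h i) ∧
    ∀ x₀ : Fin n → ℝ, x₀ ⬝ᵥ P.mulVec x₀ ≤ 1 →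
      (∀ k : ℕ, (F^[k] x₀) ⬝ᵥ P.mulVec (F^[k] x₀) ≤ 1) ∧
      Tendsto (fun k : ℕ => F^[k] x₀) atTop (nhds 0) := by
  -- Part 1: E(P) ⊆ X
  have part1 : ∀ x : Fin n → ℝ, x ⬝ᵥ P.mulVec x ≤ 1 → ∀ i, |H i ⬝ᵥ x| ≤ h i := by
    intro x hx i
    have hq : ∀ s : ℝ, 0 ≤ (h i) ^ 2 * (s * s) + (2 * (H i ⬝ᵥ x)) * s + x ⬝ᵥ P.mulVec x := by
      intro s
      have h0 := (hd i).dotProduct_mulVec_nonneg (Sum.elim (fun _ => s) x)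
      simp only [star_trivial, Matrix.fromBlocks_mulVec, sumElim_dotProduct_sumElim,
        Sum.elim_comp_inl, Sum.elim_comp_inr, dotProduct_add] at h0
      have e1 : (fun _ : Fin 1 => s) ⬝ᵥ (!![(h i)^2] *ᵥ fun _ => s) = (h i)^2 * (s * s) := by
        simp [Matrix.mulVec, dotProduct, Fin.sum_univ_one]; ring
      have e2 : (fun _ : Fin 1 => s) ⬝ᵥ ((Matrix.of fun (_ : Fin 1) j => H i j) *ᵥ x)
          = s * (H i ⬝ᵥ x) := by
        simp [Matrix.mulVec, dotProduct, Fin.sum_univ_one]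
      have e3 : x ⬝ᵥ ((Matrix.of fun j (_ : Fin 1) => H i j) *ᵥ fun _ => s)
          = (H i ⬝ᵥ x) * s := by
        simp [Matrix.mulVec, dotProduct, Fin.sum_univ_one]
        rw [Finset.sum_mul]; exact Finset.sum_congr rfl fun j _ => by ring
      rw [e1, e2, e3] at h0
      nlinarith [h0]
    have hdis := discrim_le_zero hq
    rw [discrim] at hdis
    have hsq : (H i ⬝ᵥ x) ^ 2 ≤ (h i) ^ 2 := by nlinarith [sq_nonneg (h i)]
    have hfin := Real.sqrt_le_sqrt hsq
    rwa [Real.sqrt_sq_eq_abs, Real.sqrt_sq (hh i)] at hfin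
  refine ⟨part1, ?_⟩
  rcases Nat.eq_zero_or_pos n with hn | hn
  · -- trivial case n = 0
    subst hn
    intro x₀ hx₀
    have hx0 : ∀ x : Fin 0 → ℝ, x = 0 := fun x => Subsingleton.elim _ _
    constructor
    · intro k
      rw [hx0 (F^[k] x₀)]
      simp [dotProduct]
    · have heq : (fun k : ℕ => F^[k] x₀) = fun _ => 0 := funext fun k => hx0 _
      rw [heq]; exact tendsto_const_nhds
  -- main case n > 0
  haveI : Nonempty (Fin n) := ⟨⟨0, hn⟩⟩
  haveI : Nonempty (Fin n ⊕ Fin p) := ⟨Sum.inl ⟨0, hn⟩⟩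
  set M : Matrix (Fin n ⊕ Fin p) (Fin n ⊕ Fin p) ℝ :=
    ((Matrix.fromBlocks 1 0 Nux Nuw : Matrix (Fin n ⊕ Fin m) (Fin n ⊕ Fin p) ℝ)ᵀ *
        (Matrix.fromBlocks (A_Gᵀ * P * A_G - P) (A_Gᵀ * P * B_G)
          (B_Gᵀ * P * A_G) (B_Gᵀ * P * B_G)) *
        (Matrix.fromBlocks 1 0 Nux Nuw) +
      (Matrix.fromBlocks Nvx Nvw 0 1 : Matrix (Fin p ⊕ Fin p) (Fin n ⊕ Fin p) ℝ)ᵀ *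
        (Matrix.fromBlocks
          ((-2 : ℝ) • (Matrix.diagonal α * Matrix.diagonal β * Matrix.diagonal lam))
          ((Matrix.diagonal α + Matrix.diagonal β) * Matrix.diagonal lam)
          ((Matrix.diagonal α + Matrix.diagonal β) * Matrix.diagonal lam)
          ((-2 : ℝ) • Matrix.diagonal lam)) *
        (Matrix.fromBlocks Nvx Nvw 0 1)) with hMdef
  obtain ⟨z₀, hz₀n, hz₀⟩ := quad_upper M
  have hz₀ne : z₀ ≠ 0 := by
    intro hcon; rw [hcon] at hz₀n; simp at hz₀n
  have hCQ : z₀ ⬝ᵥ M *ᵥ z₀ < 0 := hc z₀ hz₀ne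
  obtain ⟨x₁, hx₁n, hx₁⟩ := quad_upper P
  obtain ⟨x₂, hx₂n, hx₂⟩ := quad_upper (-P)
  have hx₂ne : x₂ ≠ 0 := by
    intro hcon; rw [hcon] at hx₂n; simp at hx₂n
  have hμpos : 0 < x₂ ⬝ᵥ P *ᵥ x₂ := by
    have := hP.dotProduct_mulVec_pos hx₂ne
    simpa using this
  set μ : ℝ := x₂ ⬝ᵥ P *ᵥ x₂ with hμdef
  have hlow : ∀ x : Fin n → ℝ, μ * ‖x‖ ^ 2 ≤ x ⬝ᵥ P *ᵥ x := by
    intro x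
    have hx := hx₂ x
    simp only [Matrix.neg_mulVec, dotProduct_neg] at hx
    nlinarith [hx]
  have hCPpos : 0 < x₁ ⬝ᵥ P *ᵥ x₁ := by
    have := hx₁ x₂
    rw [hx₂n] at this
    simp only [one_pow, mul_one] at this
    linarith
  set CP : ℝ := x₁ ⬝ᵥ P *ᵥ x₁ with hCPdef
  set CQ : ℝ := z₀ ⬝ᵥ M *ᵥ z₀ with hCQdef
  set ρ : ℝ := max 0 (1 + CQ / CP) with hρdef
  have hρ0 : 0 ≤ ρ := le_max_left _ _
  have hρ1 : ρ < 1 := by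
    apply max_lt one_pos
    have : CQ / CP < 0 := div_neg_of_neg_of_pos hCQ hCPpos
    linarith
  have hVnonneg : ∀ x : Fin n → ℝ, 0 ≤ x ⬝ᵥ P *ᵥ x := fun x =>
    le_trans (by positivity) (hlow x)
  -- the one-step Lyapunov decrease
  have hstep : ∀ x : Fin n → ℝ, x ⬝ᵥ P *ᵥ x ≤ 1 →
      (F x) ⬝ᵥ P *ᵥ (F x) ≤ ρ * (x ⬝ᵥ P *ᵥ x) := by
    intro x hx
    set z : Fin n ⊕ Fin p → ℝ := Sum.elim x (w x) with hzdef
    set v : Fin p → ℝ := Nvx *ᵥ x + Nvw *ᵥ (w x) with hvdef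
    -- the key algebraic identity
    have hid : z ⬝ᵥ M *ᵥ z
        = ((F x) ⬝ᵥ P *ᵥ (F x) - x ⬝ᵥ P *ᵥ x)
          + ∑ i, 2 * lam i * (w x i - α i * v i) * (β i * v i - w x i) := by
      rw [hMdef, Matrix.add_mulVec, dotProduct_add]
      have hRV : (Matrix.fromBlocks (1 : Matrix (Fin n) (Fin n) ℝ) 0 Nux Nuw) *ᵥ z
          = Sum.elim x (u x) := by
        rw [Matrix.fromBlocks_mulVec]
        simp [hzdef, hu x]
      have hRφ : (Matrix.fromBlocks Nvx Nvw (0 : Matrix (Fin p) (Fin n) ℝ) 1) *ᵥ z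
          = Sum.elim v (w x) := by
        rw [Matrix.fromBlocks_mulVec]
        simp [hzdef, hvdef]
      have c1 : z ⬝ᵥ ((Matrix.fromBlocks 1 0 Nux Nuw : Matrix (Fin n ⊕ Fin m) (Fin n ⊕ Fin p) ℝ)ᵀ *
                  (Matrix.fromBlocks (A_Gᵀ * P * A_G - P) (A_Gᵀ * P * B_G)
                    (B_Gᵀ * P * A_G) (B_Gᵀ * P * B_G)) *
                  (Matrix.fromBlocks 1 0 Nux Nuw)) *ᵥ z
          = (F x) ⬝ᵥ P *ᵥ (F x) - x ⬝ᵥ P *ᵥ x := by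
        erw [conj_form]; rw [hRV, Matrix.fromBlocks_mulVec, sumElim_dotProduct_sumElim]
        simp only [Sum.elim_comp_inl, Sum.elim_comp_inr, Matrix.sub_mulVec,
          dotProduct_add, dotProduct_sub]
        rw [conj_form, conj_form, conj_form, conj_form, hF x]
        rw [Matrix.mulVec_add, dotProduct_add, add_dotProduct,
          add_dotProduct]
        ring
      have c2 : z ⬝ᵥ ((Matrix.fromBlocks Nvx Nvw 0 1 : Matrix (Fin p ⊕ Fin p) (Fin n ⊕ Fin p) ℝ)ᵀ *
                  (Matrix.fromBlocks
                    ((-2 : ℝ) • (Matrix.diagonal α * Matrix.diagonal β * Matrix.diagonal lam))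
                    ((Matrix.diagonal α + Matrix.diagonal β) * Matrix.diagonal lam)
                    ((Matrix.diagonal α + Matrix.diagonal β) * Matrix.diagonal lam)
                    ((-2 : ℝ) • Matrix.diagonal lam)) *
                  (Matrix.fromBlocks Nvx Nvw 0 1)) *ᵥ z
          = ∑ i, 2 * lam i * (w x i - α i * v i) * (β i * v i - w x i) := by
        erw [conj_form]; rw [hRφ, Matrix.fromBlocks_mulVec, sumElim_dotProduct_sumElim]
        simp only [Sum.elim_comp_inl, Sum.elim_comp_inr, Matrix.diagonal_mul_diagonal,
          Matrix.diagonal_add, ← Matrix.diagonal_smul, Matrix.add_mulVec,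
          dotProduct_add, dotProduct, Matrix.mulVec_diagonal,
          Pi.smul_apply, smul_eq_mul, Pi.add_apply, Pi.mul_apply]
        rw [← Finset.sum_add_distrib]
        exact Finset.sum_congr rfl fun i _ => by ring
      rw [c1, c2]
    -- nonnegativity of the sector term
    have hSnn : 0 ≤ ∑ i, 2 * lam i * (w x i - α i * v i) * (β i * v i - w x i) := by
      have hXx := part1 x hx
      have hvb := ha x hXx
      have hwφ : w x = φ v := hw x
      apply Finset.sum_nonneg
      intro i _
      have hsec := hb v hvb i
      rw [hwφ]
      nlinarith [hlam i, hsec]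
    -- the quadratic form bound
    have hQ : z ⬝ᵥ M *ᵥ z ≤ CQ * ‖z‖ ^ 2 := hz₀ z
    have hxz : ‖x‖ ≤ ‖z‖ := by
      apply (pi_norm_le_iff_of_nonneg (norm_nonneg z)).2
      intro i
      exact norm_le_pi_norm z (Sum.inl i)
    have hQ2 : z ⬝ᵥ M *ᵥ z ≤ CQ * ‖x‖ ^ 2 := by
      apply le_trans hQ
      apply mul_le_mul_of_nonpos_left _ (le_of_lt hCQ)
      have h1 : 0 ≤ ‖x‖ := norm_nonneg x
      nlinarith [hxz]
    have hup : x ⬝ᵥ P *ᵥ x ≤ CP * ‖x‖ ^ 2 := hx₁ x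
    have hdiv : x ⬝ᵥ P *ᵥ x / CP ≤ ‖x‖ ^ 2 := by
      rw [div_le_iff₀ hCPpos]; linarith [hup]
    have h5 : CQ * ‖x‖ ^ 2 ≤ CQ * (x ⬝ᵥ P *ᵥ x / CP) :=
      mul_le_mul_of_nonpos_left hdiv (le_of_lt hCQ)
    have h6 : (F x) ⬝ᵥ P *ᵥ (F x) - x ⬝ᵥ P *ᵥ x ≤ CQ * (x ⬝ᵥ P *ᵥ x / CP) := by
      have := hid
      linarith [hQ2, hSnn, h5]
    have h7 : (1 + CQ / CP) * (x ⬝ᵥ P *ᵥ x) ≤ ρ * (x ⬝ᵥ P *ᵥ x) :=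
      mul_le_mul_of_nonneg_right (le_max_right _ _) (hVnonneg x)
    have h8 : CQ * (x ⬝ᵥ P *ᵥ x / CP) = (CQ / CP) * (x ⬝ᵥ P *ᵥ x) := by ring
    nlinarith [h6, h7]
  -- iterate
  intro x₀ hx₀
  have hiter : ∀ k : ℕ, (F^[k] x₀) ⬝ᵥ P *ᵥ (F^[k] x₀) ≤ ρ ^ k ∧
      (F^[k] x₀) ⬝ᵥ P *ᵥ (F^[k] x₀) ≤ 1 := by
    intro k
    induction k with
    | zero =>
      simp only [Function.iterate_zero, id_eq, pow_zero]
      exact ⟨hx₀, hx₀⟩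
    | succ k ih =>
      rw [Function.iterate_succ_apply']
      have h1 := hstep _ ih.2
      have h2 : ρ * ((F^[k] x₀) ⬝ᵥ P *ᵥ (F^[k] x₀)) ≤ ρ * ρ ^ k :=
        mul_le_mul_of_nonneg_left ih.1 hρ0
      constructor
      · rw [pow_succ]
        calc (F (F^[k] x₀)) ⬝ᵥ P *ᵥ (F (F^[k] x₀)) ≤ ρ * ρ ^ k := le_trans h1 h2
          _ = ρ ^ k * ρ := by ring
      · have h3 : ρ * ((F^[k] x₀) ⬝ᵥ P *ᵥ (F^[k] x₀)) ≤ 1 * 1 := by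
          apply mul_le_mul (le_of_lt hρ1) ih.2 (hVnonneg _) zero_le_one
        linarith [h1, h3]
  refine ⟨fun k => (hiter k).2, ?_⟩
  have hnorm : ∀ k : ℕ, ‖F^[k] x₀‖ ≤ Real.sqrt (ρ ^ k / μ) := by
    intro k
    have h1 := (hiter k).1
    have h2 := hlow (F^[k] x₀)
    have h3 : ‖F^[k] x₀‖ ^ 2 ≤ ρ ^ k / μ := by
      rw [le_div_iff₀ hμpos]; nlinarith [h1, h2]
    calc ‖F^[k] x₀‖ = Real.sqrt (‖F^[k] x₀‖ ^ 2) := (Real.sqrt_sq (norm_nonneg _)).symm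
      _ ≤ _ := Real.sqrt_le_sqrt h3
  have hlim : Tendsto (fun k : ℕ => Real.sqrt (ρ ^ k / μ)) atTop (nhds 0) := by
    have h1 : Tendsto (fun k : ℕ => ρ ^ k / μ) atTop (nhds 0) := by
      simpa using (tendsto_pow_atTop_nhds_zero_of_lt_one hρ0 hρ1).div_const μ
    have h2 := (Real.continuous_sqrt.tendsto 0).comp h1
    rw [Real.sqrt_zero] at h2
    exact h2
  rw [tendsto_zero_iff_norm_tendsto_zero]
  exact squeeze_zero (fun k => norm_nonneg _) hnorm hlim
end

section
/- Under the hypotheses of the preceding closed-loop stability theorem (plant x(k+1) = A_G x(k) + B_G u(k); NN controller in LFT form with well-posedness map w and nonlinearity φ satisfying the local sector conditions on X; positive definite P and λ ≥ 0 satisfying the negative-definite Lyapunov LMI and the block positive-semidefiniteness conditions [[h_i², H_iᵀ], [H_i, P]] ⪰ 0), every trajectory starting from x₀ ∈ E(P) satisfies the safety condition x(k) ∈ X for all k ≥ 0, where X = {x ∈ ℝⁿ : |H_iᵀ x| ≤ h_i for i = 1,…,n_X}. -/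
open Matrix Filter

private lemma dot_tr' {m n : Type*} [Fintype m] [Fintype n] (A : Matrix m n ℝ) (x : n → ℝ) (y : m → ℝ) :
    x ⬝ᵥ (Aᵀ).mulVec y = (A.mulVec x) ⬝ᵥ y := by
  rw [Matrix.dotProduct_mulVec, Matrix.vecMul_transpose]

private lemma quad_conj' {m n : Type*} [Fintype m] [Fintype n] (R : Matrix m n ℝ) (M : Matrix m m ℝ) (z : n → ℝ) :
    z ⬝ᵥ (Rᵀ * M * R).mulVec z = (R.mulVec z) ⬝ᵥ M.mulVec (R.mulVec z) := by
  rw [Matrix.mul_assoc, ← Matrix.mulVec_mulVec, dot_tr', ← Matrix.mulVec_mulVec]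

private lemma lyap_quad' (n m : ℕ) (A : Matrix (Fin n) (Fin n) ℝ) (B : Matrix (Fin n) (Fin m) ℝ)
    (P : Matrix (Fin n) (Fin n) ℝ) (x : Fin n → ℝ) (uu : Fin m → ℝ) :
    Sum.elim x uu ⬝ᵥ (Matrix.fromBlocks (Aᵀ*P*A - P) (Aᵀ*P*B) (Bᵀ*P*A) (Bᵀ*P*B)).mulVec (Sum.elim x uu)
    = (A.mulVec x + B.mulVec uu) ⬝ᵥ P.mulVec (A.mulVec x + B.mulVec uu) - x ⬝ᵥ P.mulVec x := by
  simp only [Matrix.fromBlocks_mulVec, sumElim_dotProduct_sumElim, Matrix.sub_mulVec,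
    dotProduct_add, add_dotProduct, dotProduct_sub, Matrix.mulVec_add,
    Matrix.mul_assoc, ← Matrix.mulVec_mulVec, dot_tr', Sum.elim_comp_inl, Sum.elim_comp_inr]
  ring

private lemma sec_quad' (p : ℕ) (α β lam v q : Fin p → ℝ) :
    Sum.elim v q ⬝ᵥ (Matrix.fromBlocks
        ((-2 : ℝ) • (Matrix.diagonal α * Matrix.diagonal β * Matrix.diagonal lam))
        ((Matrix.diagonal α + Matrix.diagonal β) * Matrix.diagonal lam)
        ((Matrix.diagonal α + Matrix.diagonal β) * Matrix.diagonal lam)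
        ((-2 : ℝ) • Matrix.diagonal lam)).mulVec (Sum.elim v q)
    = ∑ i, 2 * lam i * ((q i - α i * v i) * (β i * v i - q i)) := by
  simp only [Matrix.fromBlocks_mulVec, sumElim_dotProduct_sumElim,
    Matrix.diagonal_mul_diagonal, Matrix.add_mul, Matrix.add_mulVec,
    Matrix.smul_mulVec, Sum.elim_comp_inl, Sum.elim_comp_inr]
  simp only [dotProduct, Matrix.mulVec_diagonal, Pi.add_apply, Pi.smul_apply,
    smul_eq_mul, neg_smul, Pi.neg_apply]
  rw [← Finset.sum_add_distrib]
  exact Finset.sum_congr rfl fun i _ => by ring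

private lemma cont_quad' (n : ℕ) (P : Matrix (Fin n) (Fin n) ℝ) (Hv : Fin n → ℝ) (c t : ℝ) (x : Fin n → ℝ) :
    Sum.elim (fun _ : Fin 1 => t) x ⬝ᵥ (Matrix.fromBlocks (!![c])
        (Matrix.of fun (_ : Fin 1) j => Hv j)
        (Matrix.of fun j (_ : Fin 1) => Hv j) P).mulVec (Sum.elim (fun _ : Fin 1 => t) x)
    = c * (t * t) + (2 * (Hv ⬝ᵥ x)) * t + x ⬝ᵥ P.mulVec x := by
  simp only [Matrix.fromBlocks_mulVec, sumElim_dotProduct_sumElim,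
    Sum.elim_comp_inl, Sum.elim_comp_inr, dotProduct_add, Matrix.mulVec_add]
  simp only [Matrix.mulVec, dotProduct, Matrix.of_apply, Fin.sum_univ_one,
    Matrix.cons_val', Matrix.cons_val_zero, Matrix.cons_val_fin_one, Matrix.empty_val',
    Pi.add_apply, Finset.mul_sum, Finset.sum_mul]
  ring_nf
  have h1 : ∑ i, t * Hv i * x i + ∑ i, t * x i * Hv i = ∑ i, t * Hv i * x i * 2 := by
    rw [← Finset.sum_add_distrib]; exact Finset.sum_congr rfl fun i _ => by ring
  linarith [h1]

/-- Safety: under the hypotheses of the closed-loop stability theorem, every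
trajectory starting in E(P) satisfies the safety condition x(k) ∈ X for all k. -/
theorem stmt_9 (n m p nX : ℕ)
    (A_G : Matrix (Fin n) (Fin n) ℝ) (B_G : Matrix (Fin n) (Fin m) ℝ)
    (H : Fin nX → Fin n → ℝ) (h : Fin nX → ℝ) (hh : ∀ i, 0 ≤ h i)
    (Nux : Matrix (Fin m) (Fin n) ℝ) (Nuw : Matrix (Fin m) (Fin p) ℝ)
    (Nvx : Matrix (Fin p) (Fin n) ℝ) (Nvw : Matrix (Fin p) (Fin p) ℝ)
    (φ : (Fin p → ℝ) → (Fin p → ℝ)) (hφ0 : φ 0 = 0)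
    (w : (Fin n → ℝ) → (Fin p → ℝ))
    (hw : ∀ x, w x = φ (Nvx.mulVec x + Nvw.mulVec (w x))) (hw0 : w 0 = 0)
    (u : (Fin n → ℝ) → (Fin m → ℝ))
    (hu : ∀ x, u x = Nux.mulVec x + Nuw.mulVec (w x))
    (F : (Fin n → ℝ) → (Fin n → ℝ))
    (hF : ∀ x, F x = A_G.mulVec x + B_G.mulVec (u x))
    (vlo vhi α β : Fin p → ℝ)
    (hvlo : ∀ i, vlo i ≤ 0) (hvhi : ∀ i, 0 ≤ vhi i) (hαβ : ∀ i, α i ≤ β i)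
    -- (a) activation input bounds hold on the state constraint set X
    (ha : ∀ x : Fin n → ℝ, (∀ i, |H i ⬝ᵥ x| ≤ h i) →
      ∀ i, vlo i ≤ (Nvx.mulVec x + Nvw.mulVec (w x)) i ∧
           (Nvx.mulVec x + Nvw.mulVec (w x)) i ≤ vhi i)
    -- (b) local sector condition for the nonlinearity
    (hb : ∀ v : Fin p → ℝ, (∀ i, vlo i ≤ v i ∧ v i ≤ vhi i) →
      ∀ i, 0 ≤ (φ v i - α i * v i) * (β i * v i - φ v i))
    (P : Matrix (Fin n) (Fin n) ℝ) (hP : P.PosDef)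
    (lam : Fin p → ℝ) (hlam : ∀ i, 0 ≤ lam i)
    -- (c) the Lyapunov LMI is negative definite
    (hc : ∀ z : Fin n ⊕ Fin p → ℝ, z ≠ 0 →
      z ⬝ᵥ ((Matrix.fromBlocks 1 0 Nux Nuw : Matrix (Fin n ⊕ Fin m) (Fin n ⊕ Fin p) ℝ)ᵀ *
              (Matrix.fromBlocks (A_Gᵀ * P * A_G - P) (A_Gᵀ * P * B_G)
                (B_Gᵀ * P * A_G) (B_Gᵀ * P * B_G)) *
              (Matrix.fromBlocks 1 0 Nux Nuw : Matrix (Fin n ⊕ Fin m) (Fin n ⊕ Fin p) ℝ) +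
            (Matrix.fromBlocks Nvx Nvw 0 1 : Matrix (Fin p ⊕ Fin p) (Fin n ⊕ Fin p) ℝ)ᵀ *
              (Matrix.fromBlocks
                ((-2 : ℝ) • (Matrix.diagonal α * Matrix.diagonal β * Matrix.diagonal lam))
                ((Matrix.diagonal α + Matrix.diagonal β) * Matrix.diagonal lam)
                ((Matrix.diagonal α + Matrix.diagonal β) * Matrix.diagonal lam)
                ((-2 : ℝ) • Matrix.diagonal lam)) *
              (Matrix.fromBlocks Nvx Nvw 0 1 : Matrix (Fin p ⊕ Fin p) (Fin n ⊕ Fin p) ℝ)).mulVec z < 0)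
    -- (d) the set-containment LMIs
    (hd : ∀ i, (Matrix.fromBlocks (!![(h i) ^ 2])
        (Matrix.of fun (_ : Fin 1) j => H i j)
        (Matrix.of fun j (_ : Fin 1) => H i j) P).PosSemidef) :
    -- conclusion: safety of every trajectory starting in E(P)
    ∀ x₀ : Fin n → ℝ, x₀ ⬝ᵥ P.mulVec x₀ ≤ 1 →
      ∀ k : ℕ, ∀ i, |H i ⬝ᵥ (F^[k] x₀)| ≤ h i := by
  -- Step 1: E(P) ⊆ X
  have hX : ∀ x : Fin n → ℝ, x ⬝ᵥ P.mulVec x ≤ 1 → ∀ i, |H i ⬝ᵥ x| ≤ h i := by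
    intro x hx i
    have hx0 : 0 ≤ x ⬝ᵥ P.mulVec x := by simpa using hP.posSemidef.dotProduct_mulVec_nonneg x
    have key : ∀ t : ℝ, 0 ≤ (h i) ^ 2 * (t * t) + (2 * (H i ⬝ᵥ x)) * t + x ⬝ᵥ P.mulVec x := by
      intro t
      have h0 : 0 ≤ Sum.elim (fun _ : Fin 1 => t) x ⬝ᵥ
          (Matrix.fromBlocks (!![(h i) ^ 2]) (Matrix.of fun (_ : Fin 1) j => H i j)
            (Matrix.of fun j (_ : Fin 1) => H i j) P).mulVec (Sum.elim (fun _ : Fin 1 => t) x) := by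
        simpa using (hd i).dotProduct_mulVec_nonneg (Sum.elim (fun _ : Fin 1 => t) x)
      rwa [cont_quad'] at h0
    have hdisc := discrim_le_zero key
    rw [discrim] at hdisc
    have hsq : (H i ⬝ᵥ x) ^ 2 ≤ (h i) ^ 2 := by nlinarith [hx0, hx, sq_nonneg (h i)]
    calc |H i ⬝ᵥ x| = Real.sqrt ((H i ⬝ᵥ x) ^ 2) := (Real.sqrt_sq_eq_abs _).symm
      _ ≤ Real.sqrt ((h i) ^ 2) := Real.sqrt_le_sqrt hsq
      _ = h i := Real.sqrt_sq (hh i)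
  -- Step 2: invariance of E(P)
  have hinv : ∀ x : Fin n → ℝ, x ⬝ᵥ P.mulVec x ≤ 1 → (F x) ⬝ᵥ P.mulVec (F x) ≤ 1 := by
    intro x hx
    by_cases hx0 : x = 0
    · subst hx0
      have hu0 : u 0 = 0 := by simp [hu, hw0]
      have hF0 : F 0 = 0 := by simp [hF, hu0]
      rw [hF0]
      simp
    · have hzne : Sum.elim x (w x) ≠ 0 := by
        intro hzz
        exact hx0 (funext fun j => congrFun hzz (Sum.inl j))
      have hlmi := hc (Sum.elim x (w x)) hzne
      rw [Matrix.add_mulVec, dotProduct_add, quad_conj', quad_conj'] at hlmi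
      have hRV : (Matrix.fromBlocks (1 : Matrix (Fin n) (Fin n) ℝ) 0 Nux Nuw).mulVec
          (Sum.elim x (w x)) = Sum.elim x (u x) := by
        rw [Matrix.fromBlocks_mulVec]
        simp [Sum.elim_comp_inl, Sum.elim_comp_inr, (hu x).symm]
      have hRφ : (Matrix.fromBlocks Nvx Nvw 0 (1 : Matrix (Fin p) (Fin p) ℝ)).mulVec
          (Sum.elim x (w x)) = Sum.elim (Nvx.mulVec x + Nvw.mulVec (w x)) (w x) := by
        rw [Matrix.fromBlocks_mulVec]
        simp [Sum.elim_comp_inl, Sum.elim_comp_inr]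
      rw [hRV, hRφ, lyap_quad', sec_quad'] at hlmi
      have hvb := ha x (hX x hx)
      have hsect := hb _ hvb
      have hwv : w x = φ (Nvx.mulVec x + Nvw.mulVec (w x)) := hw x
      obtain ⟨v, hv⟩ : ∃ v, Nvx.mulVec x + Nvw.mulVec (w x) = v := ⟨_, rfl⟩
      rw [hv] at hlmi hvb hsect hwv
      have hnn : 0 ≤ ∑ i, 2 * lam i *
          ((w x i - α i * v i) * (β i * v i - w x i)) := by
        refine Finset.sum_nonneg fun i _ => ?_
        have hs := hsect i
        rw [hwv]
        have h2 : (0:ℝ) ≤ 2 * lam i := by linarith [hlam i]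
        exact mul_nonneg h2 hs
      have hstep : (A_G.mulVec x + B_G.mulVec (u x)) ⬝ᵥ
          P.mulVec (A_G.mulVec x + B_G.mulVec (u x)) < x ⬝ᵥ P.mulVec x := by linarith
      rw [← hF x] at hstep
      linarith
  intro x₀ hx₀ k
  have hk : (F^[k] x₀) ⬝ᵥ P.mulVec (F^[k] x₀) ≤ 1 := by
    induction k with
    | zero => simpa using hx₀
    | succ k ih =>
        rw [Function.iterate_succ_apply']
        exact hinv _ ih
  exact hX _ hk
end

section
/- Let F : ℝⁿ → ℝⁿ, let P be an n×n real symmetric positive definite matrix, and let ε > 0. Define V(x) := xᵀPx. Suppose that for every x ∈ E(P), V(F(x)) − V(x) ≤ −ε‖x‖². Then for every x₀ ∈ E(P), the sequence defined by x(0) = x₀, x(k+1) = F(x(k)) satisfies x(k) ∈ E(P) for all k ≥ 0, the sum Σ_{k=0}^{∞} ‖x(k)‖² is finite, and x(k) → 0 as k → ∞. -/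
open Matrix Filter

/-- Discrete-time Lyapunov argument with strict decrease: if V(F(x)) − V(x) ≤ −ε‖x‖²
on the sublevel set E(P), then E(P) is invariant, the trajectory is square-summable,
and it converges to the origin. -/
theorem stmt_10 (n : ℕ) (F : (Fin n → ℝ) → (Fin n → ℝ))
    (P : Matrix (Fin n) (Fin n) ℝ) (hP : P.PosDef) (ε : ℝ) (hε : 0 < ε)
    (hV : ∀ x : Fin n → ℝ, x ⬝ᵥ P.mulVec x ≤ 1 →
      F x ⬝ᵥ P.mulVec (F x) - x ⬝ᵥ P.mulVec x ≤ -ε * (x ⬝ᵥ x)) :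
    ∀ x₀ : Fin n → ℝ, x₀ ⬝ᵥ P.mulVec x₀ ≤ 1 →
      (∀ k : ℕ, (F^[k] x₀) ⬝ᵥ P.mulVec (F^[k] x₀) ≤ 1) ∧
      Summable (fun k : ℕ => (F^[k] x₀) ⬝ᵥ (F^[k] x₀)) ∧
      Tendsto (fun k : ℕ => F^[k] x₀) atTop (nhds 0) := by
  intro x₀ h₀
  set x : ℕ → (Fin n → ℝ) := fun k => F^[k] x₀ with hx
  set V : ℕ → ℝ := fun k => x k ⬝ᵥ P.mulVec (x k) with hVdef
  have hdnn : ∀ k, 0 ≤ x k ⬝ᵥ x k := fun k =>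
    Finset.sum_nonneg fun i _ => mul_self_nonneg (x k i)
  have hVnn : ∀ k, 0 ≤ V k := fun k => by
    have := hP.posSemidef.dotProduct_mulVec_nonneg (x k)
    simpa using this
  have hstep : ∀ k, V k ≤ 1 → V (k + 1) ≤ V k - ε * (x k ⬝ᵥ x k) := by
    intro k hk
    have h := hV (x k) hk
    have hx1 : x (k + 1) = F (x k) := Function.iterate_succ_apply' F k x₀
    rw [hVdef]
    simp only [hx1]
    linarith
  have hinv : ∀ k, V k ≤ 1 := by
    intro k
    induction k with
    | zero => simpa [hVdef, hx] using h₀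
    | succ k ih =>
      have := hstep k ih
      have hd := hdnn k
      nlinarith
  refine ⟨hinv, ?_, ?_⟩
  · -- summability
    have hsum : ∀ m : ℕ, ∑ k ∈ Finset.range m, (x k ⬝ᵥ x k) ≤ 1 / ε := by
      intro m
      have htel : ∑ k ∈ Finset.range m, (V (k + 1) - V k) = V m - V 0 :=
        Finset.sum_range_sub V m
      have hle : ∑ k ∈ Finset.range m, (V (k + 1) - V k) ≤
          ∑ k ∈ Finset.range m, (-ε * (x k ⬝ᵥ x k)) := by
        refine Finset.sum_le_sum fun k _ => ?_
        have := hstep k (hinv k)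
        linarith
      have : ε * ∑ k ∈ Finset.range m, (x k ⬝ᵥ x k) ≤ V 0 - V m := by
        rw [Finset.mul_sum]
        have : ∑ k ∈ Finset.range m, (-ε * (x k ⬝ᵥ x k)) =
            -∑ k ∈ Finset.range m, ε * (x k ⬝ᵥ x k) := by
          simp [Finset.sum_neg_distrib, neg_mul]
        linarith [htel ▸ hle, this ▸ hle]
      have hV0 : V 0 ≤ 1 := hinv 0
      have hVm : 0 ≤ V m := hVnn m
      rw [le_div_iff₀ hε]
      nlinarith
    exact summable_of_sum_range_le hdnn hsum
  · -- convergence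
    have hd0 : Tendsto (fun k => x k ⬝ᵥ x k) atTop (nhds 0) :=
      (summable_of_sum_range_le hdnn (by
        intro m
        have hsum : ∀ m : ℕ, ∑ k ∈ Finset.range m, (x k ⬝ᵥ x k) ≤ 1 / ε := by
          intro m
          have htel : ∑ k ∈ Finset.range m, (V (k + 1) - V k) = V m - V 0 :=
            Finset.sum_range_sub V m
          have hle : ∑ k ∈ Finset.range m, (V (k + 1) - V k) ≤
              ∑ k ∈ Finset.range m, (-ε * (x k ⬝ᵥ x k)) := by
            refine Finset.sum_le_sum fun k _ => ?_
            have := hstep k (hinv k)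
            linarith
          have : ε * ∑ k ∈ Finset.range m, (x k ⬝ᵥ x k) ≤ V 0 - V m := by
            rw [Finset.mul_sum]
            have : ∑ k ∈ Finset.range m, (-ε * (x k ⬝ᵥ x k)) =
                -∑ k ∈ Finset.range m, ε * (x k ⬝ᵥ x k) := by
              simp [Finset.sum_neg_distrib, neg_mul]
            linarith [htel ▸ hle, this ▸ hle]
          have hV0 : V 0 ≤ 1 := hinv 0
          have hVm : 0 ≤ V m := hVnn m
          rw [le_div_iff₀ hε]
          nlinarith
        exact hsum m)).tendsto_atTop_zero
    rw [tendsto_pi_nhds]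
    intro i
    have hsq : Tendsto (fun k => (x k i) ^ 2) atTop (nhds 0) := by
      refine tendsto_of_tendsto_of_tendsto_of_le_of_le tendsto_const_nhds hd0
        (fun k => sq_nonneg _) (fun k => ?_)
      have : (x k i) ^ 2 ≤ ∑ j, (x k j) ^ 2 :=
        Finset.single_le_sum (fun j _ => sq_nonneg (x k j)) (Finset.mem_univ i)
      simpa [dotProduct, pow_two] using this
    have habs : Tendsto (fun k => |x k i|) atTop (nhds 0) := by
      have := hsq.sqrt
      simpa [Real.sqrt_sq_eq_abs] using this
    simpa using (tendsto_zero_iff_abs_tendsto_zero _).mpr habs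
end

section
/- Let N_ux ∈ ℝ^{m×n}, N_uw ∈ ℝ^{m×p}, N_vx ∈ ℝ^{p×n}, N_vw ∈ ℝ^{p×p}, and let A_φ, B_φ be p×p diagonal matrices. Define C₁ = N_uw(B_φ − A_φ)/2, C₂ = N_uw(A_φ + B_φ)/2, C₃ = N_vw(B_φ − A_φ)/2, C₄ = N_vw(A_φ + B_φ)/2, and assume I_p − C₄ is invertible. For any x ∈ ℝⁿ and z ∈ ℝᵖ, define v := (I_p − C₄)⁻¹ N_vx x + (I_p − C₄)⁻¹ C₃ z and w := ((B_φ − A_φ)/2) z + ((A_φ + B_φ)/2) v. Then (i) v = N_vx x + N_vw w, and (ii) N_ux x + N_uw w = (N_ux + C₂(I_p − C₄)⁻¹ N_vx) x + (C₁ + C₂(I_p − C₄)⁻¹ C₃) z. In particular, the loop-transformed representation with matrix Ñ := [[N_ux + C₂(I − C₄)⁻¹N_vx, C₁ + C₂(I − C₄)⁻¹C₃], [(I − C₄)⁻¹N_vx, (I − C₄)⁻¹C₃]] reproduces exactly the input–output equations u = N_ux x + N_uw w and v = N_vx x + N_vw w. -/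
open Matrix

/-- The loop-transformed LFT representation Ñ reproduces exactly the input–output
equations of the original NN representation N. -/
theorem stmt_12 (n m p : ℕ)
    (Nux : Matrix (Fin m) (Fin n) ℝ) (Nuw : Matrix (Fin m) (Fin p) ℝ)
    (Nvx : Matrix (Fin p) (Fin n) ℝ) (Nvw : Matrix (Fin p) (Fin p) ℝ)
    (Aφ Bφ : Matrix (Fin p) (Fin p) ℝ) (hA : Aφ.IsDiag) (hB : Bφ.IsDiag)
    (C₁ C₂ : Matrix (Fin m) (Fin p) ℝ) (C₃ C₄ : Matrix (Fin p) (Fin p) ℝ)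
    (hC1 : C₁ = Nuw * ((1 / 2 : ℝ) • (Bφ - Aφ)))
    (hC2 : C₂ = Nuw * ((1 / 2 : ℝ) • (Aφ + Bφ)))
    (hC3 : C₃ = Nvw * ((1 / 2 : ℝ) • (Bφ - Aφ)))
    (hC4 : C₄ = Nvw * ((1 / 2 : ℝ) • (Aφ + Bφ)))
    (hinv : IsUnit (1 - C₄).det)
    (x : Fin n → ℝ) (z : Fin p → ℝ)
    (v w : Fin p → ℝ)
    (hv : v = (1 - C₄)⁻¹.mulVec (Nvx.mulVec x) + (1 - C₄)⁻¹.mulVec (C₃.mulVec z))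
    (hw : w = ((1 / 2 : ℝ) • (Bφ - Aφ)).mulVec z + ((1 / 2 : ℝ) • (Aφ + Bφ)).mulVec v) :
    v = Nvx.mulVec x + Nvw.mulVec w ∧
    Nux.mulVec x + Nuw.mulVec w =
      (Nux + C₂ * (1 - C₄)⁻¹ * Nvx).mulVec x +
      (C₁ + C₂ * (1 - C₄)⁻¹ * C₃).mulVec z := by
  have hMv : (1 - C₄).mulVec v = Nvx.mulVec x + C₃.mulVec z := by
    rw [hv, ← mulVec_add, mulVec_mulVec, mul_nonsing_inv _ hinv, one_mulVec]
  have hMv' : v - C₄.mulVec v = Nvx.mulVec x + C₃.mulVec z := by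
    rwa [sub_mulVec, one_mulVec] at hMv
  have hNvww : Nvw.mulVec w = C₃.mulVec z + C₄.mulVec v := by
    rw [hw, mulVec_add, mulVec_mulVec, mulVec_mulVec, ← hC3, ← hC4]
  have hNuww : Nuw.mulVec w = C₁.mulVec z + C₂.mulVec v := by
    rw [hw, mulVec_add, mulVec_mulVec, mulVec_mulVec, ← hC1, ← hC2]
  constructor
  · rw [hNvww]; nth_rewrite 1 [sub_eq_iff_eq_add.mp hMv']
    abel
  · rw [hNuww, hv]
    simp only [add_mulVec, mulVec_add, Matrix.mul_assoc, ← mulVec_mulVec]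
    abel
end

section
/- Let A_G ∈ ℝ^{n×n}, B_G ∈ ℝ^{n×m}. Let Q₁ ∈ ℝ^{n×n} be symmetric positive definite, Q₂ ∈ ℝ^{p×p} diagonal positive definite, and L₁ ∈ ℝ^{m×n}, L₂ ∈ ℝ^{m×p}, L₃ ∈ ℝ^{p×n}, L₄ ∈ ℝ^{p×p}. Define P := Q₁⁻¹, Λ := Q₂⁻¹, Ñ_ux := L₁Q₁⁻¹, Ñ_uz := L₂Q₂⁻¹, Ñ_vx := L₃Q₁⁻¹, Ñ_vz := L₄Q₂⁻¹, and R_V := [[I_n, 0], [Ñ_ux, Ñ_uz]], R_φ := [[Ñ_vx, Ñ_vz], [0, I_p]]. Then the block matrix [[Q₁, 0, Q₁A_Gᵀ + L₁ᵀB_Gᵀ, L₃ᵀ], [0, Q₂, L₂ᵀB_Gᵀ, L₄ᵀ], [A_GQ₁ + B_GL₁, B_GL₂, Q₁, 0], [L₃, L₄, 0, Q₂]] is positive definite if and only if R_Vᵀ [[A_GᵀPA_G − P, A_GᵀPB_G], [B_GᵀPA_G, B_GᵀPB_G]] R_V + R_φᵀ · diag(Λ, −Λ) · R_φ is negative definite.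 -/
open Matrix

/-- Convexification: the LMI in the variables (Q₁, Q₂, L₁, …, L₄) is positive
definite iff the loop-transformed Lyapunov matrix inequality is negative definite. -/
theorem stmt_14 (n m p : ℕ)
    (A_G : Matrix (Fin n) (Fin n) ℝ) (B_G : Matrix (Fin n) (Fin m) ℝ)
    (Q₁ : Matrix (Fin n) (Fin n) ℝ) (hQ₁ : Q₁.PosDef)
    (Q₂ : Matrix (Fin p) (Fin p) ℝ) (hQ₂ : Q₂.PosDef) (hQ₂d : Q₂.IsDiag)
    (L₁ : Matrix (Fin m) (Fin n) ℝ) (L₂ : Matrix (Fin m) (Fin p) ℝ)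
    (L₃ : Matrix (Fin p) (Fin n) ℝ) (L₄ : Matrix (Fin p) (Fin p) ℝ) :
    (∀ z : (Fin n ⊕ Fin p) ⊕ (Fin n ⊕ Fin p) → ℝ, z ≠ 0 →
      0 < z ⬝ᵥ (Matrix.fromBlocks
            (Matrix.fromBlocks Q₁ 0 0 Q₂)
            (Matrix.fromBlocks (Q₁ * A_Gᵀ + L₁ᵀ * B_Gᵀ) L₃ᵀ (L₂ᵀ * B_Gᵀ) L₄ᵀ)
            (Matrix.fromBlocks (A_G * Q₁ + B_G * L₁) (B_G * L₂) L₃ L₄)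
            (Matrix.fromBlocks Q₁ 0 0 Q₂)).mulVec z) ↔
    (∀ z : Fin n ⊕ Fin p → ℝ, z ≠ 0 →
      z ⬝ᵥ ((Matrix.fromBlocks (1 : Matrix (Fin n) (Fin n) ℝ) 0 (L₁ * Q₁⁻¹) (L₂ * Q₂⁻¹))ᵀ *
              (Matrix.fromBlocks (A_Gᵀ * Q₁⁻¹ * A_G - Q₁⁻¹) (A_Gᵀ * Q₁⁻¹ * B_G)
                (B_Gᵀ * Q₁⁻¹ * A_G) (B_Gᵀ * Q₁⁻¹ * B_G)) *
              (Matrix.fromBlocks (1 : Matrix (Fin n) (Fin n) ℝ) 0 (L₁ * Q₁⁻¹) (L₂ * Q₂⁻¹)) +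
            (Matrix.fromBlocks (L₃ * Q₁⁻¹) (L₄ * Q₂⁻¹) 0 (1 : Matrix (Fin p) (Fin p) ℝ))ᵀ *
              (Matrix.fromBlocks Q₂⁻¹ 0 0 (-Q₂⁻¹)) *
              (Matrix.fromBlocks (L₃ * Q₁⁻¹) (L₄ * Q₂⁻¹) 0 (1 : Matrix (Fin p) (Fin p) ℝ))).mulVec z < 0) := by
  classical
  haveI := hQ₁.isUnit.invertible
  haveI := hQ₂.isUnit.invertible
  have hQ₁t : Q₁ᵀ = Q₁ := by
    rw [← Matrix.conjTranspose_eq_transpose_of_trivial]; exact hQ₁.isHermitian.eq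
  have hQ₂t : Q₂ᵀ = Q₂ := by
    rw [← Matrix.conjTranspose_eq_transpose_of_trivial]; exact hQ₂.isHermitian.eq
  have hP : (Q₁⁻¹)ᵀ = Q₁⁻¹ := by rw [Matrix.transpose_nonsing_inv, hQ₁t]
  have hΛ : (Q₂⁻¹)ᵀ = Q₂⁻¹ := by rw [Matrix.transpose_nonsing_inv, hQ₂t]
  set Qb : Matrix (Fin n ⊕ Fin p) (Fin n ⊕ Fin p) ℝ := Matrix.fromBlocks Q₁ 0 0 Q₂ with hQbdef
  set U : Matrix (Fin n ⊕ Fin p) (Fin n ⊕ Fin p) ℝ :=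
    Matrix.fromBlocks (Q₁ * A_Gᵀ + L₁ᵀ * B_Gᵀ) L₃ᵀ (L₂ᵀ * B_Gᵀ) L₄ᵀ with hUdef
  have hstar : ∀ (k : Type) (v : k → ℝ), star v = v := fun k v => funext fun i => rfl
  -- positive definiteness of the block diagonal Qb
  have hQb_pd : Qb.PosDef := by
    refine Matrix.PosDef.of_dotProduct_mulVec_pos ?_ ?_
    · show Qbᴴ = Qb
      rw [hQbdef]
      simp [Matrix.fromBlocks_conjTranspose, hQ₁.isHermitian.eq, hQ₂.isHermitian.eq,
        Matrix.fromBlocks_transpose, Matrix.transpose_zero, hQ₁t, hQ₂t,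
        Matrix.conjTranspose_eq_transpose_of_trivial]
    · intro x hx
      have hxe : Sum.elim (x ∘ Sum.inl) (x ∘ Sum.inr) = x := Sum.elim_comp_inl_inr x
      rw [hstar, ← hxe, hQbdef, Matrix.fromBlocks_mulVec]
      simp only [Matrix.zero_mulVec, add_zero, zero_add, sumElim_dotProduct_sumElim,
        Sum.elim_comp_inl, Sum.elim_comp_inr]
      by_cases h1 : (x ∘ Sum.inl) = 0
      · have h2 : (x ∘ Sum.inr) ≠ 0 := by
          intro h2; apply hx; funext i
          cases i with
          | inl i => exact congrFun h1 i
          | inr i => exact congrFun h2 i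
        have t2 := hQ₂.dotProduct_mulVec_pos h2
        rw [hstar] at t2
        have t1 : 0 ≤ (x ∘ Sum.inl) ⬝ᵥ Q₁ *ᵥ (x ∘ Sum.inl) := by
          have := hQ₁.posSemidef.dotProduct_mulVec_nonneg (x ∘ Sum.inl); rwa [hstar] at this
        linarith
      · have t1 := hQ₁.dotProduct_mulVec_pos h1
        rw [hstar] at t1
        have t2 : 0 ≤ (x ∘ Sum.inr) ⬝ᵥ Q₂ *ᵥ (x ∘ Sum.inr) := by
          have := hQ₂.posSemidef.dotProduct_mulVec_nonneg (x ∘ Sum.inr); rwa [hstar] at this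
        linarith
  haveI : Invertible Qb := hQb_pd.isUnit.invertible
  have hQbinv : Qb⁻¹ = Matrix.fromBlocks Q₁⁻¹ 0 0 Q₂⁻¹ := by
    apply Matrix.inv_eq_right_inv
    rw [hQbdef]
    simp [Matrix.fromBlocks_multiply, Matrix.mul_inv_of_invertible,
      ← Matrix.fromBlocks_one]
  -- the bottom-left block is the conjugate transpose of the top-right block
  have hBU : Matrix.fromBlocks (A_G * Q₁ + B_G * L₁) (B_G * L₂) L₃ L₄ = Uᴴ := by
    rw [hUdef, Matrix.conjTranspose_eq_transpose_of_trivial, Matrix.fromBlocks_transpose]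
    simp [Matrix.transpose_add, Matrix.transpose_mul, hQ₁t]
  have hUT : Uᵀ = Matrix.fromBlocks (A_G * Q₁ + B_G * L₁) (B_G * L₂) L₃ L₄ := by
    rw [hBU, Matrix.conjTranspose_eq_transpose_of_trivial]
  -- the Schur complement
  set S : Matrix (Fin n ⊕ Fin p) (Fin n ⊕ Fin p) ℝ := Qb - U * Qb⁻¹ * Uᴴ with hSdef
  -- key algebraic identity for the right-hand-side matrix
  have key :
      ((Matrix.fromBlocks (1 : Matrix (Fin n) (Fin n) ℝ) 0 (L₁ * Q₁⁻¹) (L₂ * Q₂⁻¹))ᵀ *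
        (Matrix.fromBlocks (A_Gᵀ * Q₁⁻¹ * A_G - Q₁⁻¹) (A_Gᵀ * Q₁⁻¹ * B_G)
          (B_Gᵀ * Q₁⁻¹ * A_G) (B_Gᵀ * Q₁⁻¹ * B_G)) *
        (Matrix.fromBlocks (1 : Matrix (Fin n) (Fin n) ℝ) 0 (L₁ * Q₁⁻¹) (L₂ * Q₂⁻¹)) +
      (Matrix.fromBlocks (L₃ * Q₁⁻¹) (L₄ * Q₂⁻¹) 0 (1 : Matrix (Fin p) (Fin p) ℝ))ᵀ *
        (Matrix.fromBlocks Q₂⁻¹ 0 0 (-Q₂⁻¹)) *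
        (Matrix.fromBlocks (L₃ * Q₁⁻¹) (L₄ * Q₂⁻¹) 0 (1 : Matrix (Fin p) (Fin p) ℝ))) =
      -(Qb⁻¹ * S * Qb⁻¹) := by
    have hneg : -(Qb⁻¹ * S * Qb⁻¹) = Qb⁻¹ * (U * Qb⁻¹ * Uᴴ - Qb) * Qb⁻¹ := by
      rw [hSdef, show Qb - U * Qb⁻¹ * Uᴴ = -(U * Qb⁻¹ * Uᴴ - Qb) from (neg_sub _ _).symm,
        Matrix.mul_neg, Matrix.neg_mul, neg_neg]
    have hUB' : U = (Matrix.fromBlocks (A_G * Q₁ + B_G * L₁) (B_G * L₂) L₃ L₄)ᵀ := by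
      rw [← hUT, Matrix.transpose_transpose]
    rw [hneg, hQbinv, ← hBU, hUB', hQbdef]
    simp only [Matrix.fromBlocks_transpose, Matrix.fromBlocks_multiply,
      sub_eq_add_neg, Matrix.fromBlocks_add, Matrix.fromBlocks_neg, Matrix.transpose_mul,
      Matrix.transpose_add, Matrix.transpose_transpose, Matrix.transpose_zero,
      Matrix.transpose_one, hQ₁t, hQ₂t, hP, hΛ,
      Matrix.mul_zero, Matrix.zero_mul, Matrix.mul_one, Matrix.one_mul,
      add_zero, zero_add, Matrix.mul_neg, Matrix.neg_mul]
    rw [Matrix.fromBlocks_inj]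
    refine ⟨?_, ?_, ?_, ?_⟩ <;>
    · simp only [Matrix.mul_add, Matrix.add_mul, Matrix.mul_sub, Matrix.sub_mul,
        Matrix.mul_assoc, Matrix.mul_inv_cancel_left_of_invertible,
        Matrix.inv_mul_cancel_left_of_invertible, Matrix.mul_inv_of_invertible,
        Matrix.inv_mul_of_invertible, Matrix.mul_one, Matrix.one_mul,
        smul_mul_assoc, mul_smul_comm, neg_zero, neg_smul, one_smul,
        Matrix.zero_mul, Matrix.mul_zero, Matrix.neg_mul, Matrix.mul_neg]
      abel
  -- quadratic-form Schur complement identity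
  have hq : ∀ x y : Fin n ⊕ Fin p → ℝ,
      (x ⊕ᵥ y) ⬝ᵥ (Matrix.fromBlocks Qb U Uᴴ Qb).mulVec (x ⊕ᵥ y) =
        ((Qb⁻¹ * Uᴴ) *ᵥ x + y) ⬝ᵥ Qb.mulVec ((Qb⁻¹ * Uᴴ) *ᵥ x + y) +
          x ⬝ᵥ S.mulVec x := by
    intro x y
    have h := Matrix.schur_complement_eq₂₂ (D := Qb) Qb U x y hQb_pd.isHermitian
    rw [hstar, hstar, hstar] at h
    rw [Matrix.dotProduct_mulVec, h, ← Matrix.dotProduct_mulVec, ← Matrix.dotProduct_mulVec,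
      hSdef]
  -- equivalence 1 : LHS iff S is (quadratically) positive definite
  have hL : (∀ z : (Fin n ⊕ Fin p) ⊕ (Fin n ⊕ Fin p) → ℝ, z ≠ 0 →
        0 < z ⬝ᵥ (Matrix.fromBlocks Qb U Uᴴ Qb).mulVec z) ↔
      (∀ x : Fin n ⊕ Fin p → ℝ, x ≠ 0 → 0 < x ⬝ᵥ S.mulVec x) := by
    constructor
    · intro h x hx
      have hz : (x ⊕ᵥ (-((Qb⁻¹ * Uᴴ) *ᵥ x))) ≠ 0 := by
        intro h0; apply hx; funext i; exact congrFun h0 (Sum.inl i)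
      have := h _ hz
      rw [hq] at this
      simpa using this
    · intro h z hz
      have hze : Sum.elim (z ∘ Sum.inl) (z ∘ Sum.inr) = z := Sum.elim_comp_inl_inr z
      rw [← hze, hq]
      by_cases hx : (z ∘ Sum.inl) = 0
      · have hy : (z ∘ Sum.inr) ≠ 0 := by
          intro h2; apply hz; funext i
          cases i with
          | inl i => exact congrFun hx i
          | inr i => exact congrFun h2 i
        have hw : ((Qb⁻¹ * Uᴴ) *ᵥ (z ∘ Sum.inl) + (z ∘ Sum.inr)) = z ∘ Sum.inr := by
          rw [hx, Matrix.mulVec_zero, zero_add]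
        rw [hw, hx]
        have t1 := hQb_pd.dotProduct_mulVec_pos hy
        rw [hstar] at t1
        simpa using t1
      · have t2 := h _ hx
        have t1 : 0 ≤ ((Qb⁻¹ * Uᴴ) *ᵥ (z ∘ Sum.inl) + (z ∘ Sum.inr)) ⬝ᵥ
            Qb.mulVec ((Qb⁻¹ * Uᴴ) *ᵥ (z ∘ Sum.inl) + (z ∘ Sum.inr)) := by
          have := hQb_pd.posSemidef.dotProduct_mulVec_nonneg ((Qb⁻¹ * Uᴴ) *ᵥ (z ∘ Sum.inl) + (z ∘ Sum.inr))
          rwa [hstar] at this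
        linarith
  -- equivalence 2 : RHS iff S is (quadratically) positive definite
  have quad : ∀ z : Fin n ⊕ Fin p → ℝ,
      z ⬝ᵥ (Qb⁻¹ * S * Qb⁻¹).mulVec z = (Qb⁻¹ *ᵥ z) ⬝ᵥ S.mulVec (Qb⁻¹ *ᵥ z) := by
    intro z
    have hsymm : Qb⁻¹ = (Qb⁻¹)ᵀ := by
      rw [hQbinv, Matrix.fromBlocks_transpose, hP, hΛ]
      simp
    rw [Matrix.mul_assoc, ← Matrix.mulVec_mulVec, Matrix.dotProduct_mulVec z,
      hsymm, Matrix.vecMul_transpose, ← Matrix.mulVec_mulVec, ← hsymm]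
  haveI : Invertible Qb⁻¹ := hQb_pd.inv.isUnit.invertible
  have hinj : Function.Injective (Qb⁻¹).mulVec := Matrix.mulVec_injective_of_invertible _
  have hR2 : (∀ z : Fin n ⊕ Fin p → ℝ, z ≠ 0 →
        z ⬝ᵥ (-(Qb⁻¹ * S * Qb⁻¹)).mulVec z < 0) ↔
      (∀ x : Fin n ⊕ Fin p → ℝ, x ≠ 0 → 0 < x ⬝ᵥ S.mulVec x) := by
    have hneg : ∀ z : Fin n ⊕ Fin p → ℝ,
        z ⬝ᵥ (-(Qb⁻¹ * S * Qb⁻¹)).mulVec z = -(z ⬝ᵥ (Qb⁻¹ * S * Qb⁻¹).mulVec z) := by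
      intro z; rw [Matrix.neg_mulVec, dotProduct_neg]
    constructor
    · intro h x hx
      have hz : Qb *ᵥ x ≠ 0 := by
        intro h0
        apply hx
        have : Qb⁻¹ *ᵥ (Qb *ᵥ x) = 0 := by rw [h0, Matrix.mulVec_zero]
        rwa [Matrix.mulVec_mulVec, Matrix.inv_mul_of_invertible, Matrix.one_mulVec] at this
      have := h _ hz
      rw [hneg, neg_lt, neg_zero, quad, Matrix.mulVec_mulVec,
        Matrix.inv_mul_of_invertible, Matrix.one_mulVec] at this
      exact this
    · intro h z hz
      have hz' : Qb⁻¹ *ᵥ z ≠ 0 := by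
        intro h0; apply hz
        have : Qb⁻¹ *ᵥ z = Qb⁻¹ *ᵥ 0 := by rw [h0, Matrix.mulVec_zero]
        exact hinj this
      have := h _ hz'
      rw [hneg, neg_lt, neg_zero, quad]
      exact this
  rw [hBU, key]
  exact hL.trans hR2.symm
end
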